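/- Let β be an even integer and n a natural number with n ≥ β²/4. Then Υ induces a bijection from the set of shift-equivalence classes of symbols of rank n and defect β onto the set 𝒫₂(n − (β/2)²) of bi-partitions of n − β²/4. -/

import Mathlib

/-- A Lusztig symbol: a pair of finite sets of natural numbers (equivalently, a pair of
strictly decreasing finite sequences of natural numbers). -/
structure LSymbol where
  A : Finset ℕ
  B : Finset ℕ

namespace LSymbol

/-- The rank of a symbol: `Σ aᵢ + Σ bⱼ − ⌊((m₁+m₂−1)/2)²⌋`. -/
def rank (Λ : LSymbol) : ℤ :=
  ((Λ.A.sum id + Λ.B.sum id : ℕ) : ℤ) - ((Λ.A.card + Λ.B.card : ℤ) - 1) ^ 2 / 4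

/-- The defect of a symbol: `m₁ − m₂`. -/
def defect (Λ : LSymbol) : ℤ :=
  (Λ.A.card : ℤ) - (Λ.B.card : ℤ)

/-- The shift of a symbol: add 1 to every entry of each row and append a new entry 0. -/
def shift (Λ : LSymbol) : LSymbol :=
  ⟨insert 0 (Λ.A.image (· + 1)), insert 0 (Λ.B.image (· + 1))⟩

/-- Shift-equivalence: the equivalence relation generated by `Λ ∼ shift Λ`. -/
def ShiftEquiv : LSymbol → LSymbol → Prop :=
  Relation.EqvGen fun Λ Λ' => Λ' = Λ.shift

/-- The partition (as a multiset of nonzero parts) attached to one row of a symbol: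
for the row `a₁ > a₂ > … > a_m`, the parts are `aᵢ − (m − i)`, discarding zeros. -/
def rowParts (s : Finset ℕ) : Multiset ℕ :=
  ((((s.sort (· ≤ ·)).zipIdx.map fun p => p.1 - p.2) : Multiset ℕ)).filter (· ≠ 0)

/-- The bi-partition `Υ(Λ)` attached to a symbol. -/
def upsilon (Λ : LSymbol) : Multiset ℕ × Multiset ℕ :=
  (rowParts Λ.A, rowParts Λ.B)

end LSymbol

/-- `μ` is a bi-partition of `N`: an ordered pair of partitions (multisets of positive
natural numbers) whose total size is `N`. -/
def IsBipartitionOf (μ : Multiset ℕ × Multiset ℕ) (N : ℤ) : Prop :=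
  (∀ x ∈ μ.1, 0 < x) ∧ (∀ x ∈ μ.2, 0 < x) ∧ ((μ.1.sum + μ.2.sum : ℕ) : ℤ) = N


namespace LAux
open LSymbol


/-- `rowList q = [q₀+0, q₁+1, …]`. -/
def rowList (q : List ℕ) : List ℕ := q.zipIdx.map fun p => p.1 + p.2
/-- `unrow l = [l₀-0, l₁-1, …]`. -/
def unrow (l : List ℕ) : List ℕ := l.zipIdx.map fun p => p.1 - p.2

@[simp] lemma length_rowList (q : List ℕ) : (rowList q).length = q.length := by
  simp [rowList]

@[simp] lemma length_unrow (l : List ℕ) : (unrow l).length = l.length := by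
  simp [unrow]

lemma getElem_rowList (q : List ℕ) (i : ℕ) (h : i < q.length) :
    (rowList q)[i]'(by simpa) = q[i] + i := by
  simp [rowList, List.getElem_zipIdx]

lemma getElem_unrow (l : List ℕ) (i : ℕ) (h : i < l.length) :
    (unrow l)[i]'(by simpa) = l[i] - i := by
  simp [unrow, List.getElem_zipIdx]

lemma unrow_rowList (q : List ℕ) : unrow (rowList q) = q := by
  apply List.ext_getElem (by simp)
  intro i h1 h2
  rw [getElem_unrow _ _ (by simpa using h2), getElem_rowList _ _ h2]
  omega

lemma rowList_cons (a : ℕ) (q : List ℕ) :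
    rowList (a :: q) = a :: (rowList q).map (· + 1) := by
  apply List.ext_getElem (by simp)
  intro i h1 h2
  cases i with
  | zero => rw [getElem_rowList _ _ (by simpa using h1)]; simp
  | succ i =>
    rw [getElem_rowList _ _ (by simpa using h1)]
    simp only [List.getElem_cons_succ, List.getElem_map,
      getElem_rowList q i (by simpa using h2)]
    omega

lemma sorted_lt_rowList {q : List ℕ} (hq : q.Pairwise (· ≤ ·)) :
    (rowList q).Pairwise (· < ·) := by
  rw [List.pairwise_iff_getElem] at hq ⊢
  intro i j hi hj hij
  rw [getElem_rowList _ _ (by simpa using hi), getElem_rowList _ _ (by simpa using hj)]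
  have := hq i j (by simpa using hi) (by simpa using hj) hij
  omega

lemma strict_getElem_ge {l : List ℕ} (hl : l.Pairwise (· < ·)) :
    ∀ j (hj : j < l.length) i (hij : i ≤ j), l[i]'(by omega) + (j - i) ≤ l[j] := by
  rw [List.pairwise_iff_getElem] at hl
  intro j
  induction j with
  | zero => intro hj i hij; interval_cases i; simp
  | succ j ih =>
    intro hj i hij
    rcases Nat.lt_or_ge i (j+1) with h | h
    · have h1 := ih (by omega) i (by omega)
      have h2 := hl j (j+1) (by omega) hj (by omega)
      omega
    · have : i = j + 1 := by omega
      subst this; simp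

lemma index_le_getElem {l : List ℕ} (hl : l.Pairwise (· < ·)) (i : ℕ) (hi : i < l.length) :
    i ≤ l[i] := by
  have := strict_getElem_ge hl i hi 0 (by omega)
  omega

lemma rowList_unrow {l : List ℕ} (hl : l.Pairwise (· < ·)) : rowList (unrow l) = l := by
  apply List.ext_getElem (by simp)
  intro i h1 h2
  rw [getElem_rowList _ _ (by simpa using h1), getElem_unrow _ _ h2]
  have := index_le_getElem hl i h2
  omega

lemma sorted_le_unrow {l : List ℕ} (hl : l.Pairwise (· < ·)) :
    (unrow l).Pairwise (· ≤ ·) := by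
  rw [List.pairwise_iff_getElem]
  intro i j hi hj hij
  rw [getElem_unrow _ _ (by simpa using hi), getElem_unrow _ _ (by simpa using hj)]
  have h1 := strict_getElem_ge hl j (by simpa using hj) i (by omega)
  have h2 := index_le_getElem hl i (by simpa using hi)
  omega

lemma sum_map_add_one (l : List ℕ) : (l.map (· + 1)).sum = l.sum + l.length := by
  induction l with
  | nil => simp
  | cons a l ih => simp [ih]; omega

lemma sum_rowList (q : List ℕ) : (rowList q).sum = q.sum + (List.range q.length).sum := by
  induction q with
  | nil => simp [rowList]
  | cons a q ih =>
    rw [rowList_cons, List.sum_cons, sum_map_add_one, ih]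
    simp only [List.length_cons, List.range_succ, List.sum_append, List.sum_cons,
      List.sum_nil, length_rowList]
    omega


/-- Partition row reconstruction. -/
def padded (mu : Multiset ℕ) (m : ℕ) : List ℕ :=
  List.replicate (m - Multiset.card mu) 0 ++ mu.sort (· ≤ ·)

def buildRow (mu : Multiset ℕ) (m : ℕ) : Finset ℕ := (rowList (padded mu m)).toFinset

lemma sorted_padded (mu : Multiset ℕ) (m : ℕ) : (padded mu m).Pairwise (· ≤ ·) := by
  rw [padded, List.pairwise_append]
  refine ⟨List.pairwise_replicate.2 (Or.inr le_rfl), Multiset.pairwise_sort _ _, ?_⟩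
  intro x hx y hy
  have := List.eq_of_mem_replicate hx
  omega

lemma length_padded (mu : Multiset ℕ) (m : ℕ) (h : Multiset.card mu ≤ m) :
    (padded mu m).length = m := by
  simp [padded, Multiset.length_sort]
  omega

lemma sorted_lt_rowList_padded (mu : Multiset ℕ) (m : ℕ) :
    (rowList (padded mu m)).Pairwise (· < ·) :=
  sorted_lt_rowList (sorted_padded mu m)

lemma sort_buildRow (mu : Multiset ℕ) (m : ℕ) :
    (buildRow mu m).sort (· ≤ ·) = rowList (padded mu m) :=
  (List.toFinset_sort _ (sorted_lt_rowList_padded mu m).nodup).2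
    ((sorted_lt_rowList_padded mu m).imp le_of_lt)

lemma card_buildRow (mu : Multiset ℕ) (m : ℕ) (h : Multiset.card mu ≤ m) :
    (buildRow mu m).card = m := by
  rw [buildRow, List.toFinset_card_of_nodup (sorted_lt_rowList_padded mu m).nodup]
  rw [length_rowList, length_padded mu m h]

lemma rowParts_def (s : Finset ℕ) :
    rowParts s = Multiset.filter (· ≠ 0) (↑(unrow (s.sort (· ≤ ·))) : Multiset ℕ) := rfl

lemma coe_padded (mu : Multiset ℕ) (m : ℕ) :
    (↑(padded mu m) : Multiset ℕ) = Multiset.replicate (m - Multiset.card mu) 0 + mu := by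
  rw [padded, ← Multiset.coe_add, Multiset.coe_replicate, Multiset.sort_eq]

lemma rowParts_buildRow (mu : Multiset ℕ) (m : ℕ) (hpos : ∀ x ∈ mu, x ≠ 0)
    (h : Multiset.card mu ≤ m) : rowParts (buildRow mu m) = mu := by
  rw [rowParts_def, sort_buildRow, unrow_rowList, coe_padded]
  rw [Multiset.filter_add]
  have h1 : Multiset.filter (· ≠ 0) (Multiset.replicate (m - Multiset.card mu) (0:ℕ)) = 0 := by
    apply Multiset.filter_eq_nil.2
    intro a ha
    simp [Multiset.eq_of_mem_replicate ha]
  have h2 : Multiset.filter (· ≠ 0) mu = mu := Multiset.filter_eq_self.2 hpos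
  rw [h1, h2, zero_add]

lemma pos_rowParts (s : Finset ℕ) : ∀ x ∈ rowParts s, 0 < x := by
  intro x hx
  have := Multiset.of_mem_filter hx
  omega

lemma card_rowParts_le (s : Finset ℕ) : Multiset.card (rowParts s) ≤ s.card := by
  rw [rowParts_def]
  have := Multiset.card_le_card (Multiset.filter_le (· ≠ 0)
    (↑(unrow (s.sort (· ≤ ·))) : Multiset ℕ))
  simpa using this

/-- Reconstruction: every finset is `buildRow` of its parts. -/
lemma buildRow_rowParts (s : Finset ℕ) : buildRow (rowParts s) s.card = s := by
  set l := s.sort (· ≤ ·) with hl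
  have hsl : l.Pairwise (· < ·) := (Finset.sortedLT_sort s).pairwise
  have hlen : l.length = s.card := Finset.length_sort _
  -- key: padded (rowParts s) s.card = unrow l
  have key : padded (rowParts s) s.card = unrow l := by
    apply List.Perm.eq_of_pairwise' (sorted_padded _ _) (sorted_le_unrow hsl) ?_
    rw [← Multiset.coe_eq_coe, coe_padded]
    have hsplit := Multiset.filter_add_not (· ≠ 0) (↑(unrow l) : Multiset ℕ)
    have hz : Multiset.filter (fun a => ¬ a ≠ 0) (↑(unrow l) : Multiset ℕ) =
        Multiset.replicate (s.card - Multiset.card (rowParts s)) 0 := by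
      rw [Multiset.eq_replicate]
      constructor
      · have hc := congrArg Multiset.card hsplit
        rw [Multiset.card_add] at hc
        have : Multiset.card (↑(unrow l) : Multiset ℕ) = s.card := by
          simp [hlen]
        rw [rowParts_def, ← hl]
        omega
      · intro b hb
        have := Multiset.of_mem_filter hb
        omega
    rw [rowParts_def, ← hl] at hz ⊢
    rw [add_comm, ← hz]
    exact hsplit
  rw [buildRow, key, rowList_unrow hsl, hl, Finset.sort_toFinset]

/-- Injectivity: card and parts determine the row. -/
lemma row_eq_of_parts_eq {s t : Finset ℕ} (hc : s.card = t.card)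
    (hp : rowParts s = rowParts t) : s = t := by
  rw [← buildRow_rowParts s, ← buildRow_rowParts t, hp, hc]





lemma shiftRow_buildRow (mu : Multiset ℕ) (m : ℕ) (h : Multiset.card mu ≤ m) :
    insert 0 ((buildRow mu m).image (· + 1)) = buildRow mu (m + 1) := by
  have hpad : padded mu (m + 1) = 0 :: padded mu m := by
    rw [padded, padded, show m + 1 - Multiset.card mu = (m - Multiset.card mu) + 1 by omega,
      List.replicate_succ]
    rfl
  rw [buildRow, buildRow, hpad, rowList_cons, List.toFinset_cons]
  congr 1
  ext x
  simp [List.mem_map]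

lemma card_shiftRow (s : Finset ℕ) : (insert 0 (s.image (· + 1))).card = s.card + 1 := by
  rw [Finset.card_insert_of_notMem (by simp), Finset.card_image_of_injective _
    (add_left_injective 1)]

lemma rowParts_shiftRow (s : Finset ℕ) :
    rowParts (insert 0 (s.image (· + 1))) = rowParts s := by
  have h1 : insert 0 (s.image (· + 1)) = buildRow (rowParts s) (s.card + 1) := by
    conv_lhs => rw [← buildRow_rowParts s]
    exact shiftRow_buildRow _ _ (card_rowParts_le s)
  rw [h1, rowParts_buildRow _ _ (fun x hx => (pos_rowParts s x hx).ne')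
    (le_trans (card_rowParts_le s) (Nat.le_succ _))]

lemma upsilon_shift (Λ : LSymbol) : Λ.shift.upsilon = Λ.upsilon := by
  show (rowParts (insert 0 (Λ.A.image (· + 1))), rowParts (insert 0 (Λ.B.image (· + 1)))) = _
  rw [rowParts_shiftRow, rowParts_shiftRow]
  rfl

lemma iterate_props (Λ : LSymbol) (d : ℕ) :
    (shift^[d] Λ).A.card = Λ.A.card + d ∧ (shift^[d] Λ).B.card = Λ.B.card + d ∧
    (shift^[d] Λ).upsilon = Λ.upsilon ∧ ShiftEquiv Λ (shift^[d] Λ) := by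
  induction d with
  | zero => exact ⟨rfl, rfl, rfl, Relation.EqvGen.refl Λ⟩
  | succ d ih =>
    obtain ⟨h1, h2, h3, h4⟩ := ih
    rw [Function.iterate_succ_apply']
    refine ⟨?_, ?_, ?_, ?_⟩
    · show (insert 0 ((shift^[d] Λ).A.image (· + 1))).card = _
      rw [card_shiftRow, h1]
      omega
    · show (insert 0 ((shift^[d] Λ).B.image (· + 1))).card = _
      rw [card_shiftRow, h2]
      omega
    · rw [upsilon_shift, h3]
    · exact Relation.EqvGen.trans _ _ _ h4 (Relation.EqvGen.rel _ _ rfl)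

lemma upsilon_eq_of_shiftEquiv {Λ Λ' : LSymbol} (h : ShiftEquiv Λ Λ') :
    Λ.upsilon = Λ'.upsilon := by
  induction h with
  | rel x y hxy => rw [hxy, upsilon_shift]
  | refl x => rfl
  | symm x y _ ih => exact ih.symm
  | trans x y z _ _ ih1 ih2 => exact ih1.trans ih2

lemma shiftEquiv_of_upsilon_eq_of_le {Λ Λ' : LSymbol} (hu : Λ.upsilon = Λ'.upsilon)
    (hd : Λ.defect = Λ'.defect) (hc : Λ.A.card ≤ Λ'.A.card) : ShiftEquiv Λ Λ' := by
  set d := Λ'.A.card - Λ.A.card with hdd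
  obtain ⟨h1, h2, h3, h4⟩ := iterate_props Λ d
  have hdef : (Λ.A.card : ℤ) - Λ.B.card = (Λ'.A.card : ℤ) - Λ'.B.card := hd
  have hu' : rowParts Λ.A = rowParts Λ'.A ∧ rowParts Λ.B = rowParts Λ'.B := by
    simpa [upsilon, Prod.ext_iff] using hu
  have h3' : rowParts (shift^[d] Λ).A = rowParts Λ.A ∧
      rowParts (shift^[d] Λ).B = rowParts Λ.B := by
    simpa [upsilon, Prod.ext_iff] using h3
  have hu1' : rowParts (shift^[d] Λ).A = rowParts Λ'.A := h3'.1.trans hu'.1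
  have hu2' : rowParts (shift^[d] Λ).B = rowParts Λ'.B := h3'.2.trans hu'.2
  have hA : (shift^[d] Λ).A = Λ'.A :=
    row_eq_of_parts_eq (by rw [h1]; omega) hu1'
  have hB : (shift^[d] Λ).B = Λ'.B :=
    row_eq_of_parts_eq (by rw [h2]; omega) hu2'
  have : shift^[d] Λ = Λ' := by
    calc shift^[d] Λ = ⟨(shift^[d] Λ).A, (shift^[d] Λ).B⟩ := rfl
    _ = ⟨Λ'.A, Λ'.B⟩ := by rw [hA, hB]
    _ = Λ' := rfl
  rw [← this]
  exact h4



lemma sum_sort (s : Finset ℕ) : (s.sort (· ≤ ·)).sum = s.sum id := by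
  have h : (↑(s.sort (· ≤ ·)) : Multiset ℕ) = s.val := Finset.sort_eq s _
  calc (s.sort (· ≤ ·)).sum = (↑(s.sort (· ≤ ·)) : Multiset ℕ).sum := rfl
  _ = s.val.sum := by rw [h]
  _ = s.sum id := by rw [Finset.sum_eq_multiset_sum, Multiset.map_id]

lemma sum_rowParts (s : Finset ℕ) :
    (rowParts s).sum + (List.range s.card).sum = s.sum id := by
  set l := s.sort (· ≤ ·) with hl
  have hsl : l.Pairwise (· < ·) := (Finset.sortedLT_sort s).pairwise
  have hlen : l.length = s.card := Finset.length_sort _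
  have h1 : l.sum = (unrow l).sum + (List.range s.card).sum := by
    conv_lhs => rw [← rowList_unrow hsl]
    rw [sum_rowList, length_unrow, hlen]
  have h2 : (rowParts s).sum = (unrow l).sum := by
    have hsplit := Multiset.filter_add_not (· ≠ 0) (↑(unrow l) : Multiset ℕ)
    have hz : (Multiset.filter (fun a => ¬ a ≠ 0) (↑(unrow l) : Multiset ℕ)).sum = 0 := by
      apply Multiset.sum_eq_zero
      intro x hx
      have := Multiset.of_mem_filter hx
      omega
    have := congrArg Multiset.sum hsplit
    rw [Multiset.sum_add, hz, add_zero] at this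
    rw [rowParts_def, ← hl, this]
    rfl
  rw [h2, ← sum_sort s, ← hl, h1]

lemma two_mul_range_sum (n : ℕ) : 2 * (List.range n).sum = n * n - n := by
  induction n with
  | zero => simp
  | succ n ih =>
    rw [List.range_succ, List.sum_append]
    simp only [List.sum_cons, List.sum_nil, add_zero]
    have hexp : (n + 1) * (n + 1) = n * n + 2 * n + 1 := by ring
    rw [hexp]
    have h2 : n ≤ n * n := by nlinarith
    generalize n * n = q at ih h2 ⊢
    omega

lemma rank_eq (Λ : LSymbol) (k : ℤ) (hk : Λ.defect = 2 * k) :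
    Λ.rank = ((Λ.upsilon.1.sum + Λ.upsilon.2.sum : ℕ) : ℤ) + k ^ 2 := by
  set m1 := Λ.A.card with hm1
  set m2 := Λ.B.card with hm2
  set t1 := (List.range m1).sum with ht1
  set t2 := (List.range m2).sum with ht2
  have hA : (rowParts Λ.A).sum + t1 = Λ.A.sum id := sum_rowParts Λ.A
  have hB : (rowParts Λ.B).sum + t2 = Λ.B.sum id := sum_rowParts Λ.B
  have cast_aux : ∀ m : ℕ, ((List.range m).sum : ℤ) * 2 = (m : ℤ) ^ 2 - m := by
    intro m
    have h := two_mul_range_sum m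
    have h2 : m ≤ m * m := by nlinarith
    have hcast : ((2 * (List.range m).sum : ℕ) : ℤ) = ((m * m : ℕ) : ℤ) - m := by
      rw [h, Nat.cast_sub h2]
    have h4 : ((2 * (List.range m).sum : ℕ) : ℤ) = 2 * ((List.range m).sum : ℤ) := by
      push_cast; ring
    have h5 : ((m * m : ℕ) : ℤ) = (m : ℤ) * m := by push_cast; ring
    rw [sq]
    linarith [hcast, h4, h5]
  have e1 : (t1 : ℤ) * 2 = (m1 : ℤ) ^ 2 - m1 := cast_aux m1
  have e2 : (t2 : ℤ) * 2 = (m2 : ℤ) ^ 2 - m2 := cast_aux m2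
  have hk' : (m1 : ℤ) - m2 = 2 * k := hk
  have key : ((m1 : ℤ) + m2 - 1) ^ 2 = 4 * ((t1 : ℤ) + t2 - k ^ 2) + 1 := by
    linear_combination (-2) * e1 + (-2) * e2 - ((m1 : ℤ) - m2 + 2 * k) * hk'
  have hdiv : ((m1 : ℤ) + m2 - 1) ^ 2 / 4 = (t1 : ℤ) + t2 - k ^ 2 := by
    rw [key, show (4 * ((t1:ℤ) + t2 - k ^ 2) + 1) = 1 + ((t1:ℤ) + t2 - k ^ 2) * 4 by ring,
      Int.add_mul_ediv_right _ _ (by norm_num : (4:ℤ) ≠ 0)]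
    norm_num
  have hrank : Λ.rank = ((Λ.A.sum id + Λ.B.sum id : ℕ) : ℤ) - ((m1 : ℤ) + m2 - 1) ^ 2 / 4 := rfl
  rw [hrank, hdiv]
  have hS : ((Λ.A.sum id + Λ.B.sum id : ℕ) : ℤ)
      = ((Λ.upsilon.1.sum + Λ.upsilon.2.sum : ℕ) : ℤ) + t1 + t2 := by
    show _ = (((rowParts Λ.A).sum + (rowParts Λ.B).sum : ℕ) : ℤ) + t1 + t2
    push_cast [← hA, ← hB]
    ring
  rw [hS]
  ring

end LAux

/-- For even `β` and `n ≥ β²/4`, the map `Υ` induces a bijection from the set of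
shift-equivalence classes of symbols of rank `n` and defect `β` onto the set
`𝒫₂(n − (β/2)²)` of bi-partitions: `Υ` lands in that set, two symbols of rank `n` and
defect `β` have the same image iff they are shift-equivalent, and every such
bi-partition is attained. -/
theorem statement3 (β : ℤ) (hβ : Even β) (n : ℕ) (hn : (β / 2) ^ 2 ≤ (n : ℤ)) :
    (∀ Λ : LSymbol, Λ.rank = n → Λ.defect = β →
      IsBipartitionOf Λ.upsilon ((n : ℤ) - (β / 2) ^ 2)) ∧
    (∀ Λ Λ' : LSymbol, Λ.rank = n → Λ.defect = β → Λ'.rank = n → Λ'.defect = β →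
      (Λ.upsilon = Λ'.upsilon ↔ LSymbol.ShiftEquiv Λ Λ')) ∧
    (∀ μ : Multiset ℕ × Multiset ℕ,
      IsBipartitionOf μ ((n : ℤ) - (β / 2) ^ 2) →
      ∃ Λ : LSymbol, Λ.rank = n ∧ Λ.defect = β ∧ Λ.upsilon = μ) := by
  obtain ⟨r, hr⟩ := hβ
  have hk2 : β / 2 = r := by omega
  have hrankT : ∀ Λ : LSymbol, Λ.defect = β →
      Λ.rank = ((Λ.upsilon.1.sum + Λ.upsilon.2.sum : ℕ) : ℤ) + r ^ 2 := fun Λ hd =>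
    LAux.rank_eq Λ r (by rw [hd, hr]; ring)
  refine ⟨?_, ?_, ?_⟩
  · intro Λ hrk hd
    refine ⟨fun x hx => LAux.pos_rowParts Λ.A x hx, fun x hx => LAux.pos_rowParts Λ.B x hx, ?_⟩
    have h := hrankT Λ hd
    rw [hrk] at h
    rw [hk2]
    linarith
  · intro Λ Λ' h1 h2 h3 h4
    constructor
    · intro hu
      rcases le_total Λ.A.card Λ'.A.card with hc | hc
      · exact LAux.shiftEquiv_of_upsilon_eq_of_le hu (h2.trans h4.symm) hc
      · exact Relation.EqvGen.symm _ _
          (LAux.shiftEquiv_of_upsilon_eq_of_le hu.symm (h4.trans h2.symm) hc)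
    · exact LAux.upsilon_eq_of_shiftEquiv
  · intro μ hμ
    obtain ⟨hp1, hp2, hsum⟩ := hμ
    set t := max (Multiset.card μ.1) (Multiset.card μ.2) with ht
    set m1 := t + β.toNat with hm1
    set m2 := t + (-β).toNat with hm2
    have hc1 : Multiset.card μ.1 ≤ m1 := le_trans (le_max_left _ _) (Nat.le_add_right _ _)
    have hc2 : Multiset.card μ.2 ≤ m2 := le_trans (le_max_right _ _) (Nat.le_add_right _ _)
    have hcard1 : (LAux.buildRow μ.1 m1).card = m1 := LAux.card_buildRow _ _ hc1
    have hcard2 : (LAux.buildRow μ.2 m2).card = m2 := LAux.card_buildRow _ _ hc2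
    set Λ : LSymbol := ⟨LAux.buildRow μ.1 m1, LAux.buildRow μ.2 m2⟩ with hΛ
    have hd : Λ.defect = β := by
      show ((LAux.buildRow μ.1 m1).card : ℤ) - ((LAux.buildRow μ.2 m2).card : ℤ) = β
      rw [hcard1, hcard2, hm1, hm2]
      push_cast
      omega
    have hup : Λ.upsilon = μ := by
      show (LSymbol.rowParts (LAux.buildRow μ.1 m1), LSymbol.rowParts (LAux.buildRow μ.2 m2)) = μ
      rw [LAux.rowParts_buildRow μ.1 m1 (fun x hx => (hp1 x hx).ne') hc1,
          LAux.rowParts_buildRow μ.2 m2 (fun x hx => (hp2 x hx).ne') hc2]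
    refine ⟨Λ, ?_, hd, hup⟩
    have h := hrankT Λ hd
    rw [hup] at h
    rw [hk2] at hsum
    rw [h]
    linarith
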